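/- Fix an integer k ≥ 1 and λ ∈ ℂ, and let A be the k × k Jordan block matrix over ℂ with eigenvalue λ: A has λ in every diagonal entry, 1 in every entry directly below the diagonal (entries (i+1, i)), and 0ated elsewhere. There exist constants d, d' > 0 depending only on k and λ such that: for every n ≥ 2, every c > 0, and all column vectors Y_1, …, Y_n, C_2, …, C_n ∈ ℂ^k satisfying Y_i = A·Y_{i−1} + C_i for i = 2, …, n, if the total sum of the moduli of all coordinates of C_2, …, C_n is at most c and every coordinate of Y_1 and of Y_n has modulus at most c, then every coordinate of every Y_i with 2 ≤ i ≤ n−1 has modulus at most d·c·n^{k−1}; moreover, if |λ| ≠ 1, then every such coordinate has modulus at most d'·c. -/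

import Mathlib

open scoped Pointwise

namespace DistortionPaper

section Defs

variable (A B : Type*) [Group A] [Group B]

/-- The base group of the restricted wreath product: finitely supported functions `B → A`
under pointwise multiplication, as a subgroup of `B → A`. -/
def WreathBase : Subgroup (B → A) where
  carrier := {f | (Function.mulSupport f).Finite}
  one_mem' := by
    simp [Function.mulSupport_one]
  mul_mem' := by
    intro f g hf hg
    exact ((Set.Finite.union hf hg).subset (Function.mulSupport_mul f g))
  inv_mem' := by
    intro f hf
    simpa [Function.mulSupport_inv] using hf

/-- The shift automorphism of the base group: `(g ∘ f)(x) = f(x * g)`. -/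
def wreathShift (g : B) : WreathBase A B ≃* WreathBase A B where
  toFun f := ⟨fun x => (f : B → A) (x * g), by
    have h : Function.mulSupport (fun x => (f : B → A) (x * g))
        ⊆ (fun x : B => x * g) ⁻¹' Function.mulSupport (f : B → A) := fun x hx => hx
    exact (Set.Finite.preimage (Set.injOn_of_injective (mul_left_injective g)) f.2).subset h⟩
  invFun f := ⟨fun x => (f : B → A) (x * g⁻¹), by
    have h : Function.mulSupport (fun x => (f : B → A) (x * g⁻¹))
        ⊆ (fun x : B => x * g⁻¹) ⁻¹' Function.mulSupport (f : B → A) := fun x hx => hx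
    exact (Set.Finite.preimage (Set.injOn_of_injective (mul_left_injective g⁻¹)) f.2).subset h⟩
  left_inv f := Subtype.ext <| funext fun x => by simp [mul_assoc]
  right_inv f := Subtype.ext <| funext fun x => by simp [mul_assoc]
  map_mul' f₁ f₂ := Subtype.ext <| funext fun _ => rfl

/-- The action of `B` on the base group by shifts. -/
def wreathAction : B →* MulAut (WreathBase A B) where
  toFun g := wreathShift A B g
  map_one' := by
    refine MulEquiv.ext fun f => Subtype.ext <| funext fun x => ?_
    show (f : B → A) (x * 1) = (f : B → A) x
    rw [mul_one]
  map_mul' g₁ g₂ := by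
    refine MulEquiv.ext fun f => Subtype.ext <| funext fun x => ?_
    show (f : B → A) (x * (g₁ * g₂)) = (f : B → A) (x * g₁ * g₂)
    rw [mul_assoc]

/-- The restricted wreath product `A wr B`. -/
abbrev WreathProduct := WreathBase A B ⋊[wreathAction A B] B

/-- The element of the base group supported at `1 ∈ B` with value `a`. -/
noncomputable def toBase (a : A) : WreathBase A B := by
  classical
  exact ⟨fun x => if x = (1 : B) then a else 1, by
    apply Set.Finite.subset (Set.finite_singleton (1 : B))
    intro x hx
    simp only [Function.mem_mulSupport] at hx
    simp only [Set.mem_singleton_iff]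
    by_contra hne
    rw [if_neg hne] at hx
    exact hx rfl⟩

/-- The canonical copy of `A` in `A wr B` (functions supported at `1`). -/
noncomputable def ofPassive (a : A) : WreathProduct A B :=
  SemidirectProduct.inl (toBase A B a)

/-- The canonical copy of `B` in `A wr B`. -/
def ofActive (g : B) : WreathProduct A B := SemidirectProduct.inr g

/-- The generating set `S ∪ T` of `A wr B` obtained from generating sets `S` of `A`
and `T` of `B`. -/
def wreathGen (S : Set A) (T : Set B) : Set (WreathProduct A B) :=
  (fun a => ofPassive A B a) '' S ∪ (fun g => ofActive A B g) '' T

end Defs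

/-- Word length of `g` with respect to the set `T`: the least `n` such that `g` is a
product of `n` elements of `T ∪ T⁻¹` (and `0` if no such `n` exists). -/
noncomputable def wordLength {G : Type*} [Group G] (T : Set G) (g : G) : ℕ :=
  sInf {n | ∃ f : Fin n → G, (∀ i, f i ∈ T ∪ T⁻¹) ∧ (List.ofFn f).prod = g}

/-- The distortion function of a subgroup `H` of `G`, where `T` is a generating set of `G`
and `S` a generating set of `H`. -/
noncomputable def distortion {G : Type*} [Group G] (T : Set G) (H : Subgroup G)
    (S : Set H) (l : ℕ) : ℕ :=
  sSup (wordLength S '' {h : H | wordLength T (h : G) ≤ l})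

/-- `f ⪯ g` : there is `C > 0` with `f l ≤ C * g (C * l)` for all `l`. -/
def Dominates (f g : ℕ → ℕ) : Prop := ∃ C : ℕ, 0 < C ∧ ∀ l, f l ≤ C * g (C * l)

/-- `f ≈ g` : `f ⪯ g` and `g ⪯ f`. -/
def DistEquiv (f g : ℕ → ℕ) : Prop := Dominates f g ∧ Dominates g f

/-- A subgroup is subnormal if there is a finite chain from it to the whole group,
each term normal in the next. -/
def IsSubnormal {G : Type*} [Group G] (H : Subgroup G) : Prop :=
  ∃ (n : ℕ) (c : ℕ → Subgroup G), c 0 = H ∧ c n = ⊤ ∧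
    ∀ i < n, c i ≤ c (i + 1) ∧ ∀ x ∈ c (i + 1), ∀ h ∈ c i, x * h * x⁻¹ ∈ c i

/-- `ℤ` as a multiplicative group. -/
abbrev Mℤ := Multiplicative ℤ

/-- The wreath product `ℤ wr ℤ`. -/
abbrev ZwrZ := WreathProduct Mℤ Mℤ

/-- The standard generator `a` of `ℤ wr ℤ` (passive copy, supported at `1`). -/
noncomputable def aZ : ZwrZ := ofPassive Mℤ Mℤ (Multiplicative.ofAdd 1)

/-- The standard generator `b` of `ℤ wr ℤ` (active copy). -/
def bZ : ZwrZ := ofActive Mℤ Mℤ (Multiplicative.ofAdd 1)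


/-- The `k × k` Jordan block with eigenvalue `lam`: `lam` on the diagonal and `1`
directly below the diagonal. -/
def jordanBlock (k : ℕ) (lam : ℂ) : Matrix (Fin k) (Fin k) ℂ :=
  Matrix.of fun i j => if (i : ℕ) = (j : ℕ) then lam
    else if (i : ℕ) = (j : ℕ) + 1 then 1 else 0

private lemma sum_comp_le {n : ℕ} (g : Fin n → ℝ) (hg : ∀ x, 0 ≤ g x)
    (s : Finset ℕ) (ψ : ℕ → Fin n) (hinj : Set.InjOn ψ s) :
    ∑ m ∈ s, g (ψ m) ≤ ∑ x : Fin n, g x := by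
  classical
  rw [← Finset.sum_image (fun x hx y hy h => hinj hx hy h)]
  exact Finset.sum_le_sum_of_subset_of_nonneg (Finset.subset_univ _) fun x _ _ => hg x

private lemma geoLe {x : ℝ} (hx0 : 0 ≤ x) (hx1 : x < 1) (i : ℕ) :
    ∑ p ∈ Finset.range i, x ^ p ≤ (1 - x)⁻¹ := by
  have h1 : 0 < 1 - x := by linarith
  have h2 := geom_sum_mul x i
  have h3 : (∑ p ∈ Finset.range i, x ^ p) * (1 - x) = 1 - x ^ i := by
    linear_combination -h2
  have h4 : (0:ℝ) ≤ x ^ i := pow_nonneg hx0 i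
  have h5 : (∑ p ∈ Finset.range i, x ^ p) * (1 - x) ≤ 1 := by linarith
  calc (∑ p ∈ Finset.range i, x ^ p)
      = (∑ p ∈ Finset.range i, x ^ p) * (1 - x) * (1 - x)⁻¹ := by
        field_simp
    _ ≤ 1 * (1 - x)⁻¹ := by
        exact mul_le_mul_of_nonneg_right h5 (inv_nonneg.2 h1.le)
    _ = (1 - x)⁻¹ := one_mul _

private lemma master (n : ℕ) (a h : ℕ → ℝ) (ρ G : ℝ) (hρ0 : 0 ≤ ρ) (hρ1 : ρ ≤ 1)
    (ha : ∀ i, 0 ≤ a i) (hh : ∀ m, 0 ≤ h m) (hG : 0 ≤ G)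
    (hrec : ∀ i, 1 ≤ i → i < n → a i ≤ ρ * a (i - 1) + G + h i) :
    ∀ i, i < n →
      a i ≤ a 0 + (∑ p ∈ Finset.range i, ρ ^ p) * G + ∑ m ∈ Finset.Icc 1 i, h m := by
  intro i
  induction i with
  | zero => intro _; simp
  | succ i IH =>
    intro hin
    have h1 := IH (by omega)
    have h2 := hrec (i + 1) (by omega) hin
    simp only [Nat.add_sub_cancel] at h2
    have hsum : ∑ m ∈ Finset.Icc 1 (i + 1), h m
        = (∑ m ∈ Finset.Icc 1 i, h m) + h (i + 1) :=
      Finset.sum_Icc_succ_top (by omega) h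
    have hgeo : ∑ p ∈ Finset.range (i + 1), ρ ^ p
        = ρ * ∑ p ∈ Finset.range i, ρ ^ p + 1 := geom_sum_succ
    have hs1 : 0 ≤ ∑ m ∈ Finset.Icc 1 i, h m := Finset.sum_nonneg fun _ _ => hh _
    have hs2 : 0 ≤ ∑ p ∈ Finset.range i, ρ ^ p :=
      Finset.sum_nonneg fun p _ => pow_nonneg hρ0 p
    have key := mul_le_mul_of_nonneg_left h1 hρ0
    rw [hsum, hgeo]
    nlinarith [ha 0, hh (i + 1)]

private lemma jordan_mulVec {k : ℕ} (lam : ℂ) (v : Fin k → ℂ) (j : Fin k) :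
    (jordanBlock k lam).mulVec v j
      = lam * v j + (if h : 1 ≤ (j : ℕ) then v ⟨(j : ℕ) - 1, by omega⟩ else 0) := by
  classical
  by_cases hj : 1 ≤ (j : ℕ)
  · obtain ⟨j', hj'⟩ : ∃ j' : Fin k, (j' : ℕ) = (j : ℕ) - 1 :=
      ⟨⟨(j : ℕ) - 1, by omega⟩, rfl⟩
    have hgoal : (if h : 1 ≤ (j : ℕ) then v ⟨(j : ℕ) - 1, by omega⟩ else 0) = v j' := by
      rw [dif_pos hj]
      congr 1
      exact Fin.ext hj'.symm
    rw [hgoal]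
    have hterm : ∀ x : Fin k,
        (jordanBlock k lam) j x * v x
          = (if x = j then lam * v j else 0) + (if x = j' then v j' else 0) := by
      intro x
      by_cases h1 : x = j
      · subst h1
        have hne : ¬ (x = j') := by rw [Fin.ext_iff]; omega
        simp [jordanBlock, hne]
      · by_cases h2 : x = j'
        · subst h2
          have e1 : ¬ ((j : ℕ) = (x : ℕ)) := by omega
          have e2 : (j : ℕ) = (x : ℕ) + 1 := by omega
          simp [jordanBlock, e1, e2, h1]
        · have e1 : ¬ ((j : ℕ) = (x : ℕ)) := fun h => h1 (Fin.ext h.symm)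
          have e2 : ¬ ((j : ℕ) = (x : ℕ) + 1) := by
            intro h
            apply h2
            rw [Fin.ext_iff]
            omega
          simp [jordanBlock, e1, e2, h1, h2]
    rw [Matrix.mulVec, dotProduct]
    rw [Finset.sum_congr rfl fun x _ => hterm x, Finset.sum_add_distrib,
      Finset.sum_ite_eq' Finset.univ j (fun _ => lam * v j),
      Finset.sum_ite_eq' Finset.univ j' (fun _ => v j')]
    simp
  · have hterm : ∀ x : Fin k,
        (jordanBlock k lam) j x * v x = (if x = j then lam * v j else 0) := by
      intro x
      by_cases h1 : x = j
      · subst h1; simp [jordanBlock]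
      · have e1 : ¬ ((j : ℕ) = (x : ℕ)) := fun h => h1 (Fin.ext h.symm)
        have e2 : ¬ ((j : ℕ) = (x : ℕ) + 1) := by omega
        simp [jordanBlock, e1, e2, h1]
    rw [Matrix.mulVec, dotProduct]
    rw [Finset.sum_congr rfl fun x _ => hterm x,
      Finset.sum_ite_eq' Finset.univ j (fun _ => lam * v j)]
    simp [hj]



private lemma stepForward (k n : ℕ) (hn : 2 ≤ n) (lam : ℂ) (c B S : ℝ)
    (hc : 0 < c) (hB : 0 ≤ B)
    (Y C : Fin n → Fin k → ℂ)
    (hcoord : ∀ (i : Fin n), 1 ≤ (i : ℕ) → ∀ j : Fin k,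
      Y i j = lam * Y ⟨(i : ℕ) - 1, by omega⟩ j
        + (if hj : 1 ≤ (j : ℕ) then Y ⟨(i : ℕ) - 1, by omega⟩ ⟨(j : ℕ) - 1, by omega⟩ else 0)
        + C i j)
    (hY0 : ∀ j : Fin k, ‖(Y ⟨0, by omega⟩ j)‖ ≤ c)
    (hCsum : ∀ (j : Fin k) (i : ℕ), i < n →
      ∑ m ∈ Finset.Icc 1 i, (if hm : m < n then ‖(C ⟨m, hm⟩ j)‖ else 0) ≤ c)
    (hr : ‖lam‖ ≤ 1) (hS1 : 1 ≤ S)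
    (hSsum : ∀ i, i ≤ n → ∑ p ∈ Finset.range i, (‖lam‖) ^ p ≤ S)
    (j : Fin k)
    (hprev : ∀ (i : Fin n) (j' : Fin k), (j' : ℕ) + 1 = (j : ℕ) →
      ‖(Y i j')‖ ≤ B) :
    ∀ i : Fin n, ‖(Y i j)‖ ≤ 2 * c + S * B := by
  classical
  set a : ℕ → ℝ := fun m => if hm : m < n then ‖(Y ⟨m, hm⟩ j)‖ else 0 with ha_def
  set h : ℕ → ℝ := fun m => if hm : m < n then ‖(C ⟨m, hm⟩ j)‖ else 0 with hh_def
  have ha : ∀ m, 0 ≤ a m := by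
    intro m; rw [ha_def]; dsimp only; split
    · exact norm_nonneg _
    · exact le_refl 0
  have hh : ∀ m, 0 ≤ h m := by
    intro m; rw [hh_def]; dsimp only; split
    · exact norm_nonneg _
    · exact le_refl 0
  have hrec : ∀ m, 1 ≤ m → m < n →
      a m ≤ ‖lam‖ * a (m - 1) + B + h m := by
    intro m h1 h2
    have hc1 := hcoord ⟨m, h2⟩ h1 j
    have ham : a m = ‖(Y ⟨m, h2⟩ j)‖ := by rw [ha_def]; dsimp only; rw [dif_pos h2]
    have ham1 : a (m - 1) = ‖(Y ⟨m - 1, by omega⟩ j)‖ := by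
      rw [ha_def]; dsimp only; rw [dif_pos (by omega : m - 1 < n)]
    have hhm : h m = ‖(C ⟨m, h2⟩ j)‖ := by rw [hh_def]; dsimp only; rw [dif_pos h2]
    rw [ham, ham1, hhm, hc1]
    have tri : ‖(lam * Y ⟨m - 1, by omega⟩ j
          + (if hj : 1 ≤ (j : ℕ) then Y ⟨m - 1, by omega⟩ ⟨(j : ℕ) - 1, by omega⟩ else 0)
          + C ⟨m, h2⟩ j)‖
        ≤ ‖(lam * Y ⟨m - 1, by omega⟩ j)‖
          + ‖(if hj : 1 ≤ (j : ℕ) then Y ⟨m - 1, by omega⟩ ⟨(j : ℕ) - 1, by omega⟩ else 0)‖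
          + ‖(C ⟨m, h2⟩ j)‖ :=
      le_trans (norm_add_le _ _)
        (add_le_add_left (norm_add_le _ _) _)
    refine le_trans tri ?_
    rw [norm_mul]
    refine add_le_add_left (add_le_add_right ?_ _) _
    split
    · next hj1 =>
      refine hprev _ ⟨(j : ℕ) - 1, by omega⟩ ?_
      show (j : ℕ) - 1 + 1 = (j : ℕ)
      omega
    · simpa using hB
  have hm := master n a h (‖lam‖) B (norm_nonneg _) hr ha hh hB hrec
  intro i
  have hi := i.isLt
  have h0 := hm (i : ℕ) hi
  have ha0 : a 0 = ‖(Y ⟨0, by omega⟩ j)‖ := by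
    rw [ha_def]; dsimp only; rw [dif_pos (by omega : 0 < n)]
  have hai : a (i : ℕ) = ‖(Y i j)‖ := by
    rw [ha_def]; dsimp only; rw [dif_pos hi]
  rw [hai, ha0] at h0
  have e1 : (∑ p ∈ Finset.range (i : ℕ), (‖lam‖) ^ p) * B ≤ S * B :=
    mul_le_mul_of_nonneg_right (hSsum _ (by omega)) hB
  have e2 : ∑ m ∈ Finset.Icc 1 (i : ℕ), h m ≤ c := by
    rw [hh_def]; exact hCsum j _ hi
  have e3 := hY0 j
  linarith



private lemma stepBackward (k n : ℕ) (hn : 2 ≤ n) (lam : ℂ) (c B S : ℝ)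
    (hc : 0 < c) (hB : 0 ≤ B)
    (Y C : Fin n → Fin k → ℂ)
    (hcoord : ∀ (i : Fin n), 1 ≤ (i : ℕ) → ∀ j : Fin k,
      Y i j = lam * Y ⟨(i : ℕ) - 1, by omega⟩ j
        + (if hj : 1 ≤ (j : ℕ) then Y ⟨(i : ℕ) - 1, by omega⟩ ⟨(j : ℕ) - 1, by omega⟩ else 0)
        + C i j)
    (hYn : ∀ j : Fin k, ‖(Y ⟨n - 1, by omega⟩ j)‖ ≤ c)
    (hCsum : ∀ (j : Fin k) (i : ℕ), i < n →
      ∑ m ∈ Finset.Icc 1 i,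
        (if hm : 1 ≤ m ∧ m < n then ‖(C ⟨n - m, by omega⟩ j)‖ else 0) ≤ c)
    (hr : 1 ≤ ‖lam‖) (hS1 : 1 ≤ S)
    (hSsum : ∀ i, i ≤ n → ∑ p ∈ Finset.range i, ((‖lam‖)⁻¹) ^ p ≤ S)
    (j : Fin k)
    (hprev : ∀ (i : Fin n) (j' : Fin k), (j' : ℕ) + 1 = (j : ℕ) →
      ‖(Y i j')‖ ≤ B) :
    ∀ i : Fin n, ‖(Y i j)‖ ≤ 2 * c + S * B := by
  classical
  have hr0 : 0 < ‖lam‖ := lt_of_lt_of_le one_pos hr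
  have hinv1 : (‖lam‖)⁻¹ ≤ 1 := by
    rw [inv_le_one_iff₀]
    right
    exact hr
  have hinv0 : 0 ≤ (‖lam‖)⁻¹ := inv_nonneg.2 hr0.le
  set a : ℕ → ℝ := fun p => if hp : p < n then ‖(Y ⟨n - 1 - p, by omega⟩ j)‖ else 0
    with ha_def
  set h : ℕ → ℝ := fun m => if hm : 1 ≤ m ∧ m < n
      then ‖(C ⟨n - m, by omega⟩ j)‖ else 0 with hh_def
  have ha : ∀ m, 0 ≤ a m := by
    intro m; rw [ha_def]; dsimp only; split
    · exact norm_nonneg _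
    · exact le_refl 0
  have hh : ∀ m, 0 ≤ h m := by
    intro m; rw [hh_def]; dsimp only; split
    · exact norm_nonneg _
    · exact le_refl 0
  have hrec : ∀ p, 1 ≤ p → p < n →
      a p ≤ (‖lam‖)⁻¹ * a (p - 1) + B + h p := by
    intro p hp1 hp2
    have hlt : n - p < n := by omega
    have hco := hcoord ⟨n - p, hlt⟩ (by show 1 ≤ n - p; omega) j
    simp only at hco
    have hfin : (⟨n - p - 1, by omega⟩ : Fin n) = (⟨n - 1 - p, by omega⟩ : Fin n) :=
      Fin.ext (by show n - p - 1 = n - 1 - p; omega)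
    rw [hfin] at hco
    have hap : a p = ‖(Y ⟨n - 1 - p, by omega⟩ j)‖ := by
      rw [ha_def]; dsimp only; rw [dif_pos hp2]
    have hap1 : a (p - 1) = ‖(Y ⟨n - p, hlt⟩ j)‖ := by
      rw [ha_def]; dsimp only; rw [dif_pos (by omega : p - 1 < n)]
      congr 1
      exact congrArg (fun x => Y x j) (Fin.ext (by show n - 1 - (p - 1) = n - p; omega))
    have hhp : h p = ‖(C ⟨n - p, hlt⟩ j)‖ := by
      rw [hh_def]; dsimp only; rw [dif_pos ⟨hp1, hp2⟩]
    have heq : lam * Y ⟨n - 1 - p, by omega⟩ j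
        = Y ⟨n - p, hlt⟩ j
          - (if hj : 1 ≤ (j : ℕ) then Y ⟨n - 1 - p, by omega⟩ ⟨(j : ℕ) - 1, by omega⟩ else 0)
          - C ⟨n - p, hlt⟩ j := by
      linear_combination -hco
    have habs : ∀ x y z : ℂ, ‖(x - y - z)‖
        ≤ ‖x‖ + ‖y‖ + ‖z‖ := by
      intro x y z
      calc ‖(x - y - z)‖ ≤ ‖(x - y)‖ + ‖z‖ := by
            simpa [sub_eq_add_neg] using norm_add_le (x - y) (-z)
        _ ≤ ‖x‖ + ‖y‖ + ‖z‖ := by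
            have : ‖(x - y)‖ ≤ ‖x‖ + ‖y‖ := by
              simpa [sub_eq_add_neg] using norm_add_le x (-y)
            linarith
    have hDB : ‖(if hj : 1 ≤ (j : ℕ) then Y ⟨n - 1 - p, by omega⟩ ⟨(j : ℕ) - 1, by omega⟩ else 0)‖
        ≤ B := by
      split
      · refine hprev _ ⟨(j : ℕ) - 1, by omega⟩ ?_
        show (j : ℕ) - 1 + 1 = (j : ℕ)
        omega
      · simpa using hB
    have hmain : ‖lam‖ * a p ≤ a (p - 1) + B + h p := by
      rw [hap, hap1, hhp, ← norm_mul, heq]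
      have := habs (Y ⟨n - p, hlt⟩ j)
        (if hj : 1 ≤ (j : ℕ) then Y ⟨n - 1 - p, by omega⟩ ⟨(j : ℕ) - 1, by omega⟩ else 0)
        (C ⟨n - p, hlt⟩ j)
      linarith
    have step1 : a p ≤ (‖lam‖)⁻¹ * (a (p - 1) + B + h p) := by
      have := mul_le_mul_of_nonneg_left hmain hinv0
      rwa [inv_mul_cancel_left₀ hr0.ne'] at this
    have e1 : (‖lam‖)⁻¹ * B ≤ B := by nlinarith
    have e2 : (‖lam‖)⁻¹ * h p ≤ h p := by nlinarith [hh p]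
    nlinarith [step1]
  have hm := master n a h ((‖lam‖)⁻¹) B hinv0 hinv1 ha hh hB hrec
  intro i
  have hi := i.isLt
  have h0 := hm (n - 1 - (i : ℕ)) (by omega)
  have ha0 : a 0 = ‖(Y ⟨n - 1, by omega⟩ j)‖ := by
    rw [ha_def]; dsimp only; rw [dif_pos (by omega : 0 < n)]
    congr 1
  have hai : a (n - 1 - (i : ℕ)) = ‖(Y i j)‖ := by
    rw [ha_def]; dsimp only; rw [dif_pos (by omega : n - 1 - (i : ℕ) < n)]
    congr 1
    exact congrArg (fun x => Y x j) (Fin.ext (by show n - 1 - (n - 1 - (i:ℕ)) = (i:ℕ); omega))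
  rw [hai, ha0] at h0
  have e1 : (∑ p ∈ Finset.range (n - 1 - (i:ℕ)), ((‖lam‖)⁻¹) ^ p) * B ≤ S * B :=
    mul_le_mul_of_nonneg_right (hSsum _ (by omega)) hB
  have e2 : ∑ m ∈ Finset.Icc 1 (n - 1 - (i:ℕ)), h m ≤ c := by
    rw [hh_def]; exact hCsum j _ (by omega)
  have e3 := hYn j
  linarith



private lemma mainInd (k n : ℕ) (c S : ℝ) (hc : 0 < c) (hS1 : 1 ≤ S)
    (Y : Fin n → Fin k → ℂ)
    (hstep : ∀ B : ℝ, 0 ≤ B → ∀ j : Fin k,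
      (∀ (i : Fin n) (j' : Fin k), (j' : ℕ) + 1 = (j : ℕ) → ‖(Y i j')‖ ≤ B) →
      ∀ i : Fin n, ‖(Y i j)‖ ≤ 2 * c + S * B) :
    ∀ (jn : ℕ) (j : Fin k), (j : ℕ) = jn → ∀ i : Fin n,
      ‖(Y i j)‖ ≤ 2 * c * ((jn : ℝ) + 1) * S ^ jn := by
  intro jn
  induction jn with
  | zero =>
    intro j hj i
    have := hstep 0 le_rfl j (fun i j' hj' => absurd hj' (by omega)) i
    simpa using this
  | succ m IH =>
    intro j hj i
    have hB : 0 ≤ 2 * c * ((m : ℝ) + 1) * S ^ m := by positivity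
    have hst := hstep _ hB j (fun i j' hj' => IH j' (by omega) i) i
    have h1 : (1 : ℝ) ≤ S ^ (m + 1) := one_le_pow₀ hS1
    have hpow : S ^ (m + 1) = S ^ m * S := pow_succ S m
    have key : 2 * c + S * (2 * c * ((m : ℝ) + 1) * S ^ m)
        = 2 * c + 2 * c * ((m : ℝ) + 1) * S ^ (m + 1) := by rw [hpow]; ring
    have h2 : 2 * c ≤ 2 * c * S ^ (m + 1) := by nlinarith
    have h3 : 0 ≤ S ^ (m + 1) := by positivity
    push_cast
    rw [key] at hst
    nlinarith [hst]

set_option maxHeartbeats 1000000 in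
/-- bounds on the middle terms of a vector recursion `Y_i = A Y_{i-1} + C_i`
driven by a Jordan block `A` (vectors indexed here from `0` to `n-1`). -/
theorem statement19 (k : ℕ) (hk : 1 ≤ k) (lam : ℂ) :
    ∃ d d' : ℝ, 0 < d ∧ 0 < d' ∧
      ∀ (n : ℕ) (hn : 2 ≤ n) (c : ℝ) (hc : 0 < c)
        (Y C : Fin n → Fin k → ℂ),
        (∀ i : Fin n, 1 ≤ (i : ℕ) →
          Y i = (jordanBlock k lam).mulVec
            (Y ⟨(i : ℕ) - 1, by have := i.isLt; omega⟩) + C i) →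
        (∑ i : Fin n, ∑ j : Fin k,
          (if 1 ≤ (i : ℕ) then ‖(C i j)‖ else 0)) ≤ c →
        (∀ j : Fin k, ‖(Y (⟨0, by omega⟩ : Fin n) j)‖ ≤ c) →
        (∀ j : Fin k, ‖(Y (⟨n - 1, by omega⟩ : Fin n) j)‖ ≤ c) →
        (∀ i : Fin n, 1 ≤ (i : ℕ) → (i : ℕ) ≤ n - 2 →
          ∀ j : Fin k, ‖(Y i j)‖ ≤ d * c * (n : ℝ) ^ (k - 1)) ∧
        (‖lam‖ ≠ 1 →
          ∀ i : Fin n, 1 ≤ (i : ℕ) → (i : ℕ) ≤ n - 2 →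
            ∀ j : Fin k, ‖(Y i j)‖ ≤ d' * c) := by
  classical
  have hk1 : (0 : ℝ) < 2 * k := by
    have : (1 : ℝ) ≤ (k : ℝ) := by exact_mod_cast hk
    linarith
  have hbase : (0 : ℝ) < (if ‖lam‖ = 1 then 1
      else 1 + |1 - ‖lam‖|⁻¹) := by
    split_ifs
    · norm_num
    · have h2 := inv_nonneg.2 (abs_nonneg (1 - ‖lam‖))
      linarith
  refine ⟨2 * k,
    2 * k * (if ‖lam‖ = 1 then 1 else 1 + |1 - ‖lam‖|⁻¹) ^ (k - 1),
    hk1, mul_pos hk1 (pow_pos hbase _), ?_⟩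
  intro n hn c hc Y C hY hC hY0 hYn
  -- coordinate form of the recursion
  have hcoord : ∀ (i : Fin n), 1 ≤ (i : ℕ) → ∀ j : Fin k,
      Y i j = lam * Y ⟨(i : ℕ) - 1, by omega⟩ j
        + (if hj : 1 ≤ (j : ℕ) then Y ⟨(i : ℕ) - 1, by omega⟩ ⟨(j : ℕ) - 1, by omega⟩ else 0)
        + C i j := by
    intro i hi j
    have h1 := congrFun (hY i hi) j
    rw [Pi.add_apply, jordan_mulVec] at h1
    exact h1
  -- per-coordinate total sum of |C| entries
  have hctot : ∀ j : Fin k,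
      ∑ x : Fin n, (if 1 ≤ (x : ℕ) then ‖(C x j)‖ else 0) ≤ c := by
    intro j
    refine le_trans (Finset.sum_le_sum ?_) hC
    intro x _
    by_cases h1 : 1 ≤ (x : ℕ)
    · simp only [if_pos h1]
      exact Finset.single_le_sum (f := fun j' => ‖(C x j')‖)
        (fun j' _ => norm_nonneg _) (Finset.mem_univ j)
    · simp only [if_neg h1]
      simp
  have hgnonneg : ∀ (j : Fin k) (x : Fin n),
      0 ≤ (if 1 ≤ (x : ℕ) then ‖(C x j)‖ else 0) := by
    intro j x; split
    · exact norm_nonneg _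
    · exact le_refl 0
  have hCsumF : ∀ (j : Fin k) (i : ℕ), i < n →
      ∑ m ∈ Finset.Icc 1 i, (if hm : m < n then ‖(C ⟨m, hm⟩ j)‖ else 0) ≤ c := by
    intro j i hi
    have hψ : ∀ m ∈ Finset.Icc 1 i,
        (if hm : m < n then ‖(C ⟨m, hm⟩ j)‖ else 0)
          = (fun x : Fin n => if 1 ≤ (x : ℕ) then ‖(C x j)‖ else 0)
            ((fun m => if hm : m < n then (⟨m, hm⟩ : Fin n) else ⟨0, by omega⟩) m) := by
      intro m hm
      simp only [Finset.mem_Icc] at hm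
      have h1 : m < n := by omega
      have h2 : 1 ≤ m := by omega
      dsimp only
      rw [dif_pos h1, dif_pos h1, if_pos (show 1 ≤ ((⟨m, h1⟩ : Fin n) : ℕ) from h2)]
    rw [Finset.sum_congr rfl hψ]
    refine le_trans (sum_comp_le _ (hgnonneg j) _ _ ?_) (hctot j)
    intro x hx y hy hxy
    simp only [Finset.coe_Icc, Set.mem_Icc] at hx hy
    have hx1 : x < n := by omega
    have hy1 : y < n := by omega
    simp only at hxy
    rw [dif_pos hx1, dif_pos hy1] at hxy
    simpa [Fin.ext_iff] using hxy
  have hCsumB : ∀ (j : Fin k) (i : ℕ), i < n →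
      ∑ m ∈ Finset.Icc 1 i,
        (if hm : 1 ≤ m ∧ m < n then ‖(C ⟨n - m, by omega⟩ j)‖ else 0) ≤ c := by
    intro j i hi
    have hψ : ∀ m ∈ Finset.Icc 1 i,
        (if hm : 1 ≤ m ∧ m < n then ‖(C ⟨n - m, by omega⟩ j)‖ else 0)
          = (fun x : Fin n => if 1 ≤ (x : ℕ) then ‖(C x j)‖ else 0)
            ((fun m => if hm : 1 ≤ m ∧ m < n then (⟨n - m, by omega⟩ : Fin n)
              else ⟨0, by omega⟩) m) := by
      intro m hm
      simp only [Finset.mem_Icc] at hm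
      have h1 : 1 ≤ m ∧ m < n := by omega
      have h2 : 1 ≤ n - m := by omega
      dsimp only
      rw [dif_pos h1, dif_pos h1,
        if_pos (show 1 ≤ ((⟨n - m, by omega⟩ : Fin n) : ℕ) from h2)]
    rw [Finset.sum_congr rfl hψ]
    refine le_trans (sum_comp_le _ (hgnonneg j) _ _ ?_) (hctot j)
    intro x hx y hy hxy
    simp only [Finset.coe_Icc, Set.mem_Icc] at hx hy
    have hx1 : 1 ≤ x ∧ x < n := by omega
    have hy1 : 1 ≤ y ∧ y < n := by omega
    simp only at hxy
    rw [dif_pos hx1, dif_pos hy1] at hxy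
    simp only [Fin.ext_iff] at hxy
    omega
  have hn1 : (1 : ℝ) ≤ (n : ℝ) := by exact_mod_cast (by omega : 1 ≤ n)
  have hSgen : ∀ x : ℝ, 0 ≤ x → x ≤ 1 → ∀ i, i ≤ n →
      ∑ p ∈ Finset.range i, x ^ p ≤ (n : ℝ) := by
    intro x hx0 hx1 i hi
    calc ∑ p ∈ Finset.range i, x ^ p ≤ ∑ p ∈ Finset.range i, 1 :=
          Finset.sum_le_sum fun p _ => pow_le_one₀ hx0 hx1
      _ = (i : ℝ) := by simp
      _ ≤ (n : ℝ) := Nat.cast_le.2 hi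
  constructor
  · -- polynomial bound
    intro i hi1 hi2 j
    have hfinal : ‖(Y i j)‖
        ≤ 2 * c * (((j : ℕ) : ℝ) + 1) * (n : ℝ) ^ (j : ℕ) := by
      rcases le_or_gt (‖lam‖) 1 with hle | hgt
      · exact mainInd k n c (n : ℝ) hc hn1 Y
          (fun B hB j hprev => stepForward k n hn lam c B (n : ℝ) hc hB Y C hcoord hY0
            hCsumF hle hn1 (hSgen _ (norm_nonneg _) hle) j hprev)
          (j : ℕ) j rfl i
      · have hr0 : 0 < ‖lam‖ := lt_trans one_pos hgt
        have hinv1 : (‖lam‖)⁻¹ ≤ 1 := by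
          rw [inv_le_one_iff₀]; right; exact hgt.le
        exact mainInd k n c (n : ℝ) hc hn1 Y
          (fun B hB j hprev => stepBackward k n hn lam c B (n : ℝ) hc hB Y C hcoord hYn
            hCsumB hgt.le hn1 (hSgen _ (inv_nonneg.2 hr0.le) hinv1) j hprev)
          (j : ℕ) j rfl i
    have e1 : ((j : ℕ) : ℝ) + 1 ≤ (k : ℝ) := by exact_mod_cast (by omega : (j : ℕ) + 1 ≤ k)
    have e2 : (n : ℝ) ^ (j : ℕ) ≤ (n : ℝ) ^ (k - 1) :=
      pow_le_pow_right₀ hn1 (by omega)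
    have e0 : (0 : ℝ) ≤ (n : ℝ) ^ (j : ℕ) := by positivity
    have e3 := mul_le_mul e1 e2 e0 (by positivity : (0 : ℝ) ≤ (k : ℝ))
    nlinarith [hfinal, hc]
  · -- constant bound when |lam| ≠ 1
    intro hne i hi1 hi2 j
    rw [if_neg hne]
    have hs1 : (1 : ℝ) ≤ 1 + |1 - ‖lam‖|⁻¹ := by
      have := inv_nonneg.2 (abs_nonneg (1 - ‖lam‖))
      linarith
    have hfinal : ‖(Y i j)‖
        ≤ 2 * c * (((j : ℕ) : ℝ) + 1) * (1 + |1 - ‖lam‖|⁻¹) ^ (j : ℕ) := by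
      rcases lt_or_gt_of_ne hne with hlt | hgt
      · have habs : |1 - ‖lam‖| = 1 - ‖lam‖ :=
          abs_of_pos (by linarith)
        have hSs : ∀ i, i ≤ n → ∑ p ∈ Finset.range i, (‖lam‖) ^ p
            ≤ 1 + |1 - ‖lam‖|⁻¹ := by
          intro i _
          refine le_trans (geoLe (norm_nonneg _) hlt i) ?_
          rw [habs]
          have := inv_nonneg.2 (by linarith : (0:ℝ) ≤ 1 - ‖lam‖)
          linarith
        exact mainInd k n c _ hc hs1 Y
          (fun B hB j hprev => stepForward k n hn lam c B _ hc hB Y C hcoord hY0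
            hCsumF hlt.le hs1 hSs j hprev)
          (j : ℕ) j rfl i
      · have hr0 : 0 < ‖lam‖ := lt_trans one_pos hgt
        have habs : |1 - ‖lam‖| = ‖lam‖ - 1 := by
          rw [abs_of_neg (by linarith : (1:ℝ) - ‖lam‖ < 0)]; ring
        have hρ : (‖lam‖)⁻¹ < 1 := by
          rw [inv_lt_one_iff₀]; right; exact hgt
        have hkey : (1 - (‖lam‖)⁻¹)⁻¹ = 1 + (‖lam‖ - 1)⁻¹ := by
          have h1 : ‖lam‖ - 1 ≠ 0 := ne_of_gt (by linarith)
          have h2 : ‖lam‖ ≠ 0 := hr0.ne'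
          have h3 : (1:ℝ) - (‖lam‖)⁻¹ ≠ 0 := ne_of_gt (by linarith)
          field_simp
          ring
        have hSs : ∀ i, i ≤ n → ∑ p ∈ Finset.range i, ((‖lam‖)⁻¹) ^ p
            ≤ 1 + |1 - ‖lam‖|⁻¹ := by
          intro i _
          refine le_trans (geoLe (inv_nonneg.2 hr0.le) hρ i) ?_
          rw [habs, hkey]
        exact mainInd k n c _ hc hs1 Y
          (fun B hB j hprev => stepBackward k n hn lam c B _ hc hB Y C hcoord hYn
            hCsumB hgt.le hs1 hSs j hprev)
          (j : ℕ) j rfl i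
    have e1 : ((j : ℕ) : ℝ) + 1 ≤ (k : ℝ) := by exact_mod_cast (by omega : (j : ℕ) + 1 ≤ k)
    have e2 : (1 + |1 - ‖lam‖|⁻¹) ^ (j : ℕ)
        ≤ (1 + |1 - ‖lam‖|⁻¹) ^ (k - 1) :=
      pow_le_pow_right₀ hs1 (by omega)
    have e0 : (0 : ℝ) ≤ (1 + |1 - ‖lam‖|⁻¹) ^ (j : ℕ) := by positivity
    have e3 := mul_le_mul e1 e2 e0 (by positivity : (0 : ℝ) ≤ (k : ℝ))
    nlinarith [hfinal, hc]

end DistortionPaper
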